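/- With V, J, K as above, if Z and Z' are linearly independent vectors in V, then K(Z,Z') ≠ 0 as an endomorphism of V. Consequently, if Z ≠ 0 satisfies (R + 4BK)(X,Y)Z = 0 for all X,Y and Z' ≠ 0 satisfies (R + 4B'K)(X,Y)Z' = 0 for all X,Y, where R is any algebraic curvature tensor, then B = B'. -/

import Mathlib

/-- The constant holomorphic sectional curvature algebraic curvature tensor. -/
noncomputable def chscK {V : Type*} [NormedAddCommGroup V] [InnerProductSpace ℝ V]
    (J : V →ₗ[ℝ] V) (X Y W : V) : V :=
  (1 / 4 : ℝ) • ((inner ℝ Y W : ℝ) • X - (inner ℝ X W : ℝ) • Y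
    + (inner ℝ (J Y) W : ℝ) • J X - (inner ℝ (J X) W : ℝ) • J Y
    + (2 * (inner ℝ X (J Y) : ℝ)) • J W)

/-- Strict Cauchy–Schwarz for a linearly independent pair. -/
lemma strictCS_aux {V : Type*} [NormedAddCommGroup V] [InnerProductSpace ℝ V] {W U : V}
    (h : LinearIndependent ℝ ![W, U]) :
    (inner ℝ W U : ℝ)^2 < (inner ℝ W W : ℝ) * (inner ℝ U U : ℝ) := by
  rw [linearIndependent_fin2] at h
  simp only [Matrix.cons_val_one, Matrix.head_cons, Matrix.cons_val_zero] at h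
  obtain ⟨hU, hW⟩ := h
  have hUn : ‖U‖ ≠ 0 := norm_ne_zero_iff.mpr hU
  have h1 : (inner ℝ W U : ℝ) < ‖W‖ * ‖U‖ := by
    rw [inner_lt_norm_mul_iff_real]
    intro hc
    apply hW (‖U‖⁻¹ * ‖W‖)
    rw [mul_smul, ← hc, smul_smul, inv_mul_cancel₀ hUn, one_smul]
  have h2 : -(inner ℝ W U : ℝ) < ‖W‖ * ‖U‖ := by
    have := inner_lt_norm_mul_iff_real (x := -W) (y := U)
    rw [inner_neg_left, norm_neg] at this
    rw [this]
    intro hc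
    apply hW (-(‖U‖⁻¹ * ‖W‖))
    rw [smul_neg] at hc
    have hc2 : ‖U‖ • W = -(‖W‖ • U) := neg_eq_iff_eq_neg.mp hc
    have : (-(‖U‖⁻¹ * ‖W‖)) • U = ‖U‖⁻¹ • (-(‖W‖ • U)) := by module
    rw [this, ← hc2, smul_smul, inv_mul_cancel₀ hUn, one_smul]
  have habs : |(inner ℝ W U : ℝ)| < ‖W‖ * ‖U‖ := abs_lt.2 ⟨by linarith, h1⟩
  have := mul_self_lt_mul_self (abs_nonneg _) habs
  rw [abs_mul_abs_self] at this
  rw [real_inner_self_eq_norm_mul_norm, real_inner_self_eq_norm_mul_norm]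
  nlinarith

/-- Key inner ℝ product formula for `chscK`. -/
lemma chscK_inner_aux {V : Type*} [NormedAddCommGroup V] [InnerProductSpace ℝ V]
    (J : V →ₗ[ℝ] V) (hJ2 : ∀ X, J (J X) = -X)
    (hJg : ∀ X Y : V, (inner ℝ (J X) (J Y) : ℝ) = inner ℝ X Y) (W U : V) :
    (inner ℝ (chscK J W U U) W : ℝ) =
      (1/4) * ((inner ℝ U U : ℝ) * (inner ℝ W W : ℝ) - (inner ℝ W U : ℝ)^2
        + 3 * (inner ℝ W (J U) : ℝ)^2) := by
  have skew : ∀ x y : V, (inner ℝ (J x) y : ℝ) = -(inner ℝ x (J y) : ℝ) := by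
    intro x y
    have := hJg x (J y)
    rw [hJ2, inner_neg_right] at this
    linarith
  have hJUU : (inner ℝ (J U) U : ℝ) = 0 := by
    have := skew U U
    have h2 : (inner ℝ (J U) U : ℝ) = inner ℝ U (J U) := real_inner_comm _ _
    linarith
  simp only [chscK, real_inner_smul_left, inner_add_left, inner_sub_left]
  rw [hJUU, real_inner_comm U W, skew W U, real_inner_comm (J U) W]
  ring

/-- `chscK` is linear in the third slot (smul). -/
lemma chscK_smul_aux {V : Type*} [NormedAddCommGroup V] [InnerProductSpace ℝ V]
    (J : V →ₗ[ℝ] V) (X Y W : V) (a : ℝ) :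
    chscK J X Y (a • W) = a • chscK J X Y W := by
  simp only [chscK, inner_smul_right, map_smul]
  module

/-- Positivity of the key quantity for a linearly independent pair. -/
lemma chscK_inner_pos_aux {V : Type*} [NormedAddCommGroup V] [InnerProductSpace ℝ V]
    (J : V →ₗ[ℝ] V) (hJ2 : ∀ X, J (J X) = -X)
    (hJg : ∀ X Y : V, (inner ℝ (J X) (J Y) : ℝ) = inner ℝ X Y) {W U : V}
    (h : LinearIndependent ℝ ![W, U]) :
    0 < (inner ℝ (chscK J W U U) W : ℝ) := by
  rw [chscK_inner_aux J hJ2 hJg]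
  have := strictCS_aux h
  nlinarith [sq_nonneg (inner ℝ W (J U) : ℝ)]

theorem stmt1 {V : Type*} [NormedAddCommGroup V] [InnerProductSpace ℝ V]
    [FiniteDimensional ℝ V] (m : ℕ) (hm : 2 ≤ m)
    (hdim : Module.finrank ℝ V = 2 * m)
    (J : V →ₗ[ℝ] V) (hJ2 : ∀ X, J (J X) = -X)
    (hJg : ∀ X Y : V, (inner ℝ (J X) (J Y) : ℝ) = inner ℝ X Y)
    (R : V →ₗ[ℝ] V →ₗ[ℝ] V →ₗ[ℝ] V)
    (hRanti : ∀ X Y Z : V, R X Y Z = - R Y X Z)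
    (hRskew : ∀ X Y Z W : V, (inner ℝ (R X Y Z) W : ℝ) = - inner ℝ (R X Y W) Z)
    (hRpair : ∀ X Y Z W : V, (inner ℝ (R X Y Z) W : ℝ) = inner ℝ (R Z W X) Y)
    (hRbianchi : ∀ X Y Z : V, R X Y Z + R Y Z X + R Z X Y = 0)
    (B B' : ℝ) (Z Z' : V) (hZ : Z ≠ 0) (hZ' : Z' ≠ 0)
    (hN : ∀ X Y : V, R X Y Z + (4 * B) • chscK J X Y Z = 0)
    (hN' : ∀ X Y : V, R X Y Z' + (4 * B') • chscK J X Y Z' = 0) :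
    (∀ W W' : V, LinearIndependent ℝ ![W, W'] → ∃ U, chscK J W W' U ≠ 0) ∧ B = B' := by
  have skew : ∀ x y : V, (inner ℝ (J x) y : ℝ) = -(inner ℝ x (J y) : ℝ) := by
    intro x y
    have := hJg x (J y)
    rw [hJ2, inner_neg_right] at this
    linarith
  constructor
  · intro W W' hind
    refine ⟨W', fun hc => ?_⟩
    have hpos := chscK_inner_pos_aux J hJ2 hJg hind
    rw [hc, inner_zero_left] at hpos
    exact lt_irrefl 0 hpos
  · by_cases hind : LinearIndependent ℝ ![Z', Z]
    · -- independent case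
      set c : ℝ := inner ℝ (chscK J Z' Z Z) Z' with hc_def
      have hc : 0 < c := chscK_inner_pos_aux J hJ2 hJg hind
      -- c = c'
      have hcc' : (inner ℝ (chscK J Z Z' Z') Z : ℝ) = c := by
        rw [hc_def, chscK_inner_aux J hJ2 hJg, chscK_inner_aux J hJ2 hJg]
        have h1 : (inner ℝ Z (J Z') : ℝ) = -(inner ℝ Z' (J Z) : ℝ) := by
          have := skew Z' Z
          have h2 : (inner ℝ (J Z') Z : ℝ) = inner ℝ Z (J Z') := real_inner_comm _ _
          linarith
        rw [h1, real_inner_comm Z Z']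
        ring
      have e1 : (inner ℝ (R Z' Z Z) Z' : ℝ) + 4 * B * c = 0 := by
        have := congrArg (fun v => (inner ℝ v Z' : ℝ)) (hN Z' Z)
        simpa [inner_add_left, real_inner_smul_left, mul_assoc] using this
      have e2 : (inner ℝ (R Z Z' Z') Z : ℝ) + 4 * B' * c = 0 := by
        have := congrArg (fun v => (inner ℝ v Z : ℝ)) (hN' Z Z')
        simp only [inner_add_left, real_inner_smul_left, inner_zero_left] at this
        rw [hcc'] at this
        linarith
      have e3 : (inner ℝ (R Z' Z Z) Z' : ℝ) = inner ℝ (R Z Z' Z') Z := hRpair Z' Z Z Z'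
      have : (B - B') * c = 0 := by linarith
      rcases mul_eq_zero.mp this with h | h
      · linarith
      · exact absurd h hc.ne'
    · -- dependent case: Z' = a • Z
      rw [linearIndependent_fin2] at hind
      simp only [Matrix.cons_val_one, Matrix.head_cons, Matrix.cons_val_zero] at hind
      push_neg at hind
      obtain ⟨a, ha⟩ := hind hZ
      have ha0 : a ≠ 0 := by
        intro h
        rw [h, zero_smul] at ha
        exact hZ' ha.symm
      have hN'' : ∀ X Y : V, R X Y Z + (4 * B') • chscK J X Y Z = 0 := by
        intro X Y
        have := hN' X Y
        rw [← ha, chscK_smul_aux, map_smul] at this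
        have h2 : a • (R X Y Z + (4 * B') • chscK J X Y Z) = 0 := by
          rw [smul_add, smul_comm a (4 * B')]
          exact this
        exact (smul_eq_zero.mp h2).resolve_left ha0
      have hkey : ∀ X Y : V, (4 * B - 4 * B') • chscK J X Y Z = 0 := by
        intro X Y
        have h1 := hN X Y
        have h2 := hN'' X Y
        have : (4 * B - 4 * B') • chscK J X Y Z =
            (R X Y Z + (4 * B) • chscK J X Y Z) - (R X Y Z + (4 * B') • chscK J X Y Z) := by
          module
        rw [this, h1, h2, sub_zero]
      -- find W independent from Z
      have hne : Submodule.span ℝ {Z} ≠ ⊤ := by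
        intro htop
        have h1 : Module.finrank ℝ V = 1 := by
          rw [← finrank_span_singleton (K := ℝ) hZ, htop, finrank_top]
        omega
      obtain ⟨W, -, hW⟩ := SetLike.exists_of_lt (lt_of_le_of_ne le_top hne : Submodule.span ℝ {Z} < ⊤)
      have hWZ : LinearIndependent ℝ ![W, Z] := by
        rw [linearIndependent_fin2]
        refine ⟨by simp [hZ], ?_⟩
        intro b hb
        simp only [Matrix.cons_val_one, Matrix.head_cons, Matrix.cons_val_zero] at hb
        apply hW
        rw [← hb]
        exact Submodule.smul_mem _ b (Submodule.mem_span_singleton_self Z)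
      have hpos := chscK_inner_pos_aux J hJ2 hJg hWZ
      have := congrArg (fun v => (inner ℝ v W : ℝ)) (hkey W Z)
      simp only [real_inner_smul_left, inner_zero_left] at this
      rcases mul_eq_zero.mp this with h | h
      · linarith
      · exact absurd h hpos.ne'
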